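/- Fix a > 0. With k(N) = ⌊a·N^{2/3}⌋, one has lim_{N→∞} cos(π/(N/k(N)+2))^{2·k(N)} = exp(-π²·a³). -/

import Mathlib

open Filter Real Topology

theorem stmt_9 (a : ℝ) (ha : 0 < a) :
    Tendsto (fun N : ℕ =>
        (Real.cos (Real.pi / ((N : ℝ) / (⌊a * (N : ℝ) ^ ((2 : ℝ) / 3)⌋₊ : ℝ) + 2))) ^
          (2 * ⌊a * (N : ℝ) ^ ((2 : ℝ) / 3)⌋₊))
      atTop (nhds (Real.exp (-(Real.pi ^ 2 * a ^ 3)))) := by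
  set k : ℕ → ℕ := fun N => ⌊a * (N : ℝ) ^ ((2 : ℝ) / 3)⌋₊ with hkdef
  set y : ℕ → ℝ := fun N => (N : ℝ) ^ ((2 : ℝ) / 3) with hydef
  have hy : Tendsto y atTop atTop :=
    (tendsto_rpow_atTop (by norm_num)).comp tendsto_natCast_atTop_atTop
  have hy_pos : ∀ᶠ N : ℕ in atTop, 0 < y N := hy.eventually_gt_atTop 0
  have hN_pos : ∀ᶠ N : ℕ in atTop, 0 < (N : ℝ) := by
    filter_upwards [eventually_ge_atTop 1] with N hN
    exact_mod_cast Nat.lt_of_lt_of_le Nat.zero_lt_one hN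
  -- k N / y N → a
  have hc : Tendsto (fun N : ℕ => (k N : ℝ) / y N) atTop (𝓝 a) := by
    have hlow : Tendsto (fun N : ℕ => a - 1 / y N) atTop (𝓝 a) := by
      have h0 : Tendsto (fun N : ℕ => 1 / y N) atTop (𝓝 (0:ℝ)) := by
        simpa [one_div, Function.comp_def] using tendsto_inv_atTop_zero.comp hy
      simpa using tendsto_const_nhds.sub h0
    refine tendsto_of_tendsto_of_tendsto_of_le_of_le' hlow tendsto_const_nhds ?_ ?_
    · filter_upwards [hy_pos] with N hyN
      have h1 : a * y N - 1 < (k N : ℝ) := by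
        have := Nat.sub_one_lt_floor (a * y N)
        simpa [hkdef] using this
      have heq : a - 1 / y N = (a * y N - 1) / y N := by field_simp
      rw [heq, div_le_div_iff₀ hyN hyN]
      nlinarith
    · filter_upwards [hy_pos] with N hyN
      rw [div_le_iff₀ hyN]
      exact Nat.floor_le (by positivity)
  have hk_pos : ∀ᶠ N : ℕ in atTop, 1 ≤ k N := by
    filter_upwards [hy.eventually_ge_atTop (1 / a)] with N hN
    refine Nat.le_floor ?_
    rw [div_le_iff₀ ha] at hN
    have h' : (1:ℝ) ≤ a * y N := by
      calc (1:ℝ) ≤ y N * a := hN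
        _ = a * y N := mul_comm _ _
    exact_mod_cast h'
  -- k N / N → 0
  have hd : Tendsto (fun N : ℕ => (k N : ℝ) / (N : ℝ)) atTop (𝓝 0) := by
    have hmain : Tendsto (fun N : ℕ => (k N : ℝ) / y N * (N : ℝ) ^ (-(1 : ℝ) / 3))
        atTop (𝓝 (a * 0)) :=
      hc.mul (((tendsto_rpow_neg_atTop (y := (1:ℝ)/3) (by norm_num)).comp
        tendsto_natCast_atTop_atTop).congr (fun N => by norm_num))
    have hmain' : Tendsto (fun N : ℕ => (k N : ℝ) / y N * (N : ℝ) ^ (-(1 : ℝ) / 3))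
        atTop (𝓝 (0:ℝ)) := by simpa using hmain
    refine hmain'.congr' ?_
    filter_upwards [hN_pos] with N hN
    have hy1 : y N * (N : ℝ) ^ ((1:ℝ)/3) = (N : ℝ) := by
      show (N : ℝ) ^ ((2:ℝ)/3) * (N : ℝ) ^ ((1:ℝ)/3) = (N : ℝ)
      rw [← Real.rpow_add hN]
      norm_num
    rw [show (-(1:ℝ)/3 : ℝ) = -((1:ℝ)/3) by norm_num, Real.rpow_neg hN.le,
      ← div_eq_mul_inv, div_div, hy1]
  -- θ
  set θ : ℕ → ℝ := fun N => Real.pi * (k N : ℝ) / ((N : ℝ) + 2 * (k N : ℝ)) with hθdef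
  have hθ_pos : ∀ᶠ N : ℕ in atTop, 0 < θ N := by
    filter_upwards [hN_pos, hk_pos] with N h1 h2
    have : (0:ℝ) < (k N : ℝ) := by exact_mod_cast h2
    positivity
  have hθ0 : Tendsto θ atTop (𝓝 0) := by
    have hup : Tendsto (fun N : ℕ => Real.pi * ((k N : ℝ) / (N : ℝ))) atTop (𝓝 0) := by
      simpa using hd.const_mul Real.pi
    refine tendsto_of_tendsto_of_tendsto_of_le_of_le' tendsto_const_nhds hup ?_ ?_
    · filter_upwards [hθ_pos] with N h; exact h.le
    · filter_upwards [hN_pos, hk_pos] with N h1 h2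
      have hk' : (0:ℝ) ≤ (k N : ℝ) := Nat.cast_nonneg _
      show Real.pi * (k N : ℝ) / ((N : ℝ) + 2 * (k N : ℝ)) ≤ Real.pi * ((k N : ℝ) / (N : ℝ))
      rw [← mul_div_assoc]
      refine div_le_div_of_nonneg_left (by positivity) h1 ?_
      linarith
  -- t := k θ² → π² a³
  have ht : Tendsto (fun N : ℕ => (k N : ℝ) * θ N ^ 2) atTop (𝓝 (Real.pi ^ 2 * a ^ 3)) := by
    have hden : Tendsto (fun N : ℕ => (1 + 2 * ((k N : ℝ) / (N : ℝ))) ^ 2) atTop (𝓝 1) := by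
      have := ((hd.const_mul 2).const_add 1).pow 2
      simpa using this
    have hmain : Tendsto
        (fun N : ℕ => Real.pi ^ 2 * ((k N : ℝ) / y N) ^ 3 / (1 + 2 * ((k N : ℝ) / (N : ℝ))) ^ 2)
        atTop (𝓝 (Real.pi ^ 2 * a ^ 3 / 1)) :=
      ((hc.pow 3).const_mul _).div hden one_ne_zero
    have hmain' := hmain
    rw [div_one] at hmain'
    refine hmain'.congr' ?_
    filter_upwards [hN_pos, hk_pos] with N h1 h2
    have hk' : (0:ℝ) < (k N : ℝ) := by exact_mod_cast h2
    have hy3 : y N ^ 3 = (N : ℝ) ^ 2 := by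
      rw [hydef]
      rw [← Real.rpow_natCast ((N:ℝ) ^ ((2:ℝ)/3)) 3, ← Real.rpow_natCast (N:ℝ) 2,
        ← Real.rpow_mul h1.le]
      norm_num
    have hyN : (0:ℝ) < y N := by positivity
    have hden' : (0:ℝ) < (N : ℝ) + 2 * (k N : ℝ) := by positivity
    show Real.pi ^ 2 * ((k N : ℝ) / y N) ^ 3 / (1 + 2 * ((k N : ℝ) / (N : ℝ))) ^ 2
        = (k N : ℝ) * (Real.pi * (k N : ℝ) / ((N : ℝ) + 2 * (k N : ℝ))) ^ 2
    field_simp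
    rw [hy3]
  -- eventually θ < 1/2
  have hθ_small : ∀ᶠ N : ℕ in atTop, θ N < 1 / 2 :=
    hθ0.eventually (eventually_lt_nhds (by norm_num))
  -- g := 2 k log (cos θ) → -(π² a³)
  have hg : Tendsto (fun N : ℕ => 2 * (k N : ℝ) * Real.log (Real.cos (θ N))) atTop
      (𝓝 (-(Real.pi ^ 2 * a ^ 3))) := by
    have hL : Tendsto (fun N : ℕ => -((k N : ℝ) * θ N ^ 2) / (1 - θ N ^ 2 / 2)) atTop
        (𝓝 (-(Real.pi ^ 2 * a ^ 3))) := by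
      have hden : Tendsto (fun N : ℕ => 1 - θ N ^ 2 / 2) atTop (𝓝 1) := by
        have := ((hθ0.pow 2).div_const 2).const_sub 1
        simpa using this
      have := (ht.neg).div hden one_ne_zero
      rw [div_one] at this
      exact this
    have hU : Tendsto (fun N : ℕ =>
        -((k N : ℝ) * θ N ^ 2) + 5 / 48 * ((k N : ℝ) * θ N ^ 2) * θ N ^ 2) atTop
        (𝓝 (-(Real.pi ^ 2 * a ^ 3))) := by
      have := (ht.neg).add ((ht.const_mul (5/48 : ℝ)).mul (hθ0.pow 2))
      simpa using this
    refine tendsto_of_tendsto_of_tendsto_of_le_of_le' hL hU ?_ ?_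
    · filter_upwards [hθ_pos, hθ_small] with N h1 h2
      set x := θ N with hx
      have hx2 : x ^ 2 / 2 < 1 := by nlinarith
      have hc1 : 1 - x ^ 2 / 2 ≤ Real.cos x := Real.one_sub_sq_div_two_le_cos
      have hcpos : 0 < Real.cos x := by nlinarith
      have hlog : (Real.cos x - 1) / Real.cos x ≤ Real.log (Real.cos x) := by
        have h := Real.log_le_sub_one_of_pos (inv_pos.2 hcpos)
        rw [Real.log_inv] at h
        have : 1 - (Real.cos x)⁻¹ ≤ Real.log (Real.cos x) := by linarith
        calc (Real.cos x - 1) / Real.cos x = 1 - (Real.cos x)⁻¹ := by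
              field_simp
            _ ≤ _ := this
      have hchain : -(x ^ 2 / 2) / (1 - x ^ 2 / 2) ≤ (Real.cos x - 1) / Real.cos x := by
        rw [div_le_div_iff₀ (by nlinarith) hcpos]
        nlinarith [Real.cos_le_one x]
      have hkn : (0:ℝ) ≤ 2 * (k N : ℝ) := by positivity
      have := mul_le_mul_of_nonneg_left (hchain.trans hlog) hkn
      calc -((k N : ℝ) * x ^ 2) / (1 - x ^ 2 / 2)
          = 2 * (k N : ℝ) * (-(x ^ 2 / 2) / (1 - x ^ 2 / 2)) := by
            rw [← mul_div_assoc]; congr 1; ring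
        _ ≤ 2 * (k N : ℝ) * Real.log (Real.cos x) := this
    · filter_upwards [hθ_pos, hθ_small] with N h1 h2
      set x := θ N with hx
      have hxle : |x| ≤ 1 := by rw [abs_of_pos h1]; linarith
      have hb := Real.cos_bound hxle
      rw [abs_of_pos h1] at hb
      have hub : Real.cos x ≤ 1 - x ^ 2 / 2 + x ^ 4 * (5 / 96) := by
        have := abs_le.mp hb
        linarith [this.2]
      have hcpos : 0 < Real.cos x := by
        have := Real.one_sub_sq_div_two_le_cos (x := x)
        nlinarith
      have hlog : Real.log (Real.cos x) ≤ -(x ^ 2 / 2) + x ^ 4 * (5 / 96) := by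
        have := Real.log_le_sub_one_of_pos hcpos
        linarith
      have hkn : (0:ℝ) ≤ 2 * (k N : ℝ) := by positivity
      have := mul_le_mul_of_nonneg_left hlog hkn
      calc 2 * (k N : ℝ) * Real.log (Real.cos x)
          ≤ 2 * (k N : ℝ) * (-(x ^ 2 / 2) + x ^ 4 * (5 / 96)) := this
        _ = -((k N : ℝ) * x ^ 2) + 5 / 48 * ((k N : ℝ) * x ^ 2) * x ^ 2 := by ring
  -- conclude
  have hexp := (Real.continuous_exp.tendsto _).comp hg
  refine hexp.congr' ?_
  filter_upwards [hN_pos, hk_pos, hθ_pos, hθ_small] with N h1 h2 h3 h4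
  have hk' : (0:ℝ) < (k N : ℝ) := by exact_mod_cast h2
  have hden' : (0:ℝ) < (N : ℝ) + 2 * (k N : ℝ) := by positivity
  have hθeq : Real.pi / ((N : ℝ) / (k N : ℝ) + 2) = θ N := by
    rw [hθdef]
    have : (N : ℝ) / (k N : ℝ) + 2 = ((N : ℝ) + 2 * (k N : ℝ)) / (k N : ℝ) := by
      field_simp
    rw [this, div_div_eq_mul_div]
  have hcpos : 0 < Real.cos (θ N) := by
    have hx1 : θ N < 1 / 2 := h4
    have := Real.one_sub_sq_div_two_le_cos (x := θ N)
    nlinarith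
  show Real.exp (2 * (k N : ℝ) * Real.log (Real.cos (θ N)))
      = Real.cos (Real.pi / ((N : ℝ) / (k N : ℝ) + 2)) ^ (2 * k N)
  rw [hθeq]
  have : (2 * (k N : ℝ)) = ((2 * k N : ℕ) : ℝ) := by push_cast; ring
  rw [this, Real.exp_nat_mul, Real.exp_log hcpos]
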